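/- For every integer M ≥ 2, the function ψ_M(q) = (1-(1-q)^M)² / (1-(1-q²)^M) is strictly decreasing on the open interval (0,1); that is, for all 0 < q₁ < q₂ < 1, ψ_M(q₂) < ψ_M(q₁). Moreover ψ_M(1) = 1. -/

import Mathlib

open Finset

lemma sum_lt_key (M : ℕ) (hM : 2 ≤ M) {a c : ℝ} (ha : 0 < a) (hac : a < c) :
    a ^ (M-1) * ∑ j ∈ range M, c ^ j < c ^ (M-1) * ∑ j ∈ range M, a ^ j := by
  rw [Finset.mul_sum, Finset.mul_sum]
  apply Finset.sum_lt_sum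
  · intro j hj
    rw [Finset.mem_range] at hj
    have h1 : a ^ (M-1) = a ^ j * a ^ (M-1-j) := by rw [← pow_add]; congr 1; omega
    have h2 : c ^ (M-1) = c ^ j * c ^ (M-1-j) := by rw [← pow_add]; congr 1; omega
    rw [h1, h2]
    have hc : (0:ℝ) < c := lt_trans ha hac
    have hpos : (0:ℝ) < a ^ j * c ^ j := by positivity
    calc a ^ j * a^(M-1-j) * c ^ j = (a^j*c^j) * a^(M-1-j) := by ring
    _ ≤ (a^j*c^j) * c^(M-1-j) :=
        mul_le_mul_of_nonneg_left (pow_le_pow_left₀ ha.le hac.le _) hpos.le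
    _ = c ^ j * c ^(M-1-j) * a ^ j := by ring
  · refine ⟨0, Finset.mem_range.2 (by omega), ?_⟩
    simp only [pow_zero, mul_one]
    exact pow_lt_pow_left₀ hac ha.le (by omega)

lemma bracket_key (M : ℕ) (hM : 2 ≤ M) {q : ℝ} (h0 : 0 < q) (h1 : q < 1) :
    (1-q) ^ (M-1) * (1 - (1-q^2)^M) < q * ((1 - (1-q)^M) * (1-q^2)^(M-1)) := by
  have ha : (0:ℝ) < 1 - q := by linarith
  have hac : (1:ℝ) - q < 1 - q^2 := by nlinarith
  have e1 : 1 - (1-q^2)^M = q^2 * ∑ j ∈ range M, (1-q^2)^j := by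
    linear_combination geom_sum_mul (1-q^2) M
  have e2 : 1 - (1-q)^M = q * ∑ j ∈ range M, (1-q)^j := by
    linear_combination geom_sum_mul (1-q) M
  have key := sum_lt_key M hM ha hac
  have hq2 : (0:ℝ) < q^2 := by positivity
  have := mul_lt_mul_of_pos_left key hq2
  rw [e1, e2]
  calc (1-q)^(M-1) * (q^2 * ∑ j ∈ range M, (1-q^2)^j)
      = q^2 * ((1-q)^(M-1) * ∑ j ∈ range M, (1-q^2)^j) := by ring
    _ < q^2 * ((1-q^2)^(M-1) * ∑ j ∈ range M, (1-q)^j) := this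
    _ = q * ((q * ∑ j ∈ range M, (1-q)^j) * (1-q^2)^(M-1)) := by ring

theorem psi_strict_anti (M : ℕ) (hM : 2 ≤ M) :
    StrictAntiOn
      (fun q : ℝ => (1 - (1 - q) ^ M) ^ 2 / (1 - (1 - q ^ 2) ^ M))
      (Set.Ioo (0:ℝ) 1) ∧
    (1 - (1 - (1:ℝ)) ^ M) ^ 2 / (1 - (1 - (1:ℝ) ^ 2) ^ M) = 1 := by
  have hMne : M ≠ 0 := by omega
  have hDpos : ∀ q ∈ Set.Ioo (0:ℝ) 1, 0 < 1 - (1 - q^2)^M := by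
    intro q hq
    have h1 : (1:ℝ) - q^2 < 1 := by nlinarith [hq.1, hq.2]
    have h2 : (0:ℝ) ≤ 1 - q^2 := by nlinarith [hq.1, hq.2]
    have := pow_lt_one₀ h2 h1 hMne
    linarith
  have hder : ∀ q ∈ Set.Ioo (0:ℝ) 1,
      HasDerivAt (fun q : ℝ => (1 - (1 - q) ^ M) ^ 2 / (1 - (1 - q ^ 2) ^ M))
        (((2*(1-(1-q)^M)*((M:ℝ)*(1-q)^(M-1))) * (1 - (1-q^2)^M)
          - (1-(1-q)^M)^2 * ((M:ℝ)*(1-q^2)^(M-1)*(2*q))) / (1 - (1-q^2)^M)^2) q := by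
    intro q hq
    have hinner : HasDerivAt (fun q : ℝ => 1 - (1-q)^M) ((M:ℝ) * (1-q)^(M-1)) q := by
      have h1 : HasDerivAt (fun q : ℝ => 1 - q) (-1) q := (hasDerivAt_id q).const_sub 1
      have h3 := (h1.fun_pow M).const_sub 1
      exact h3.congr_deriv (by ring)
    have hN : HasDerivAt (fun q : ℝ => (1 - (1-q)^M)^2)
        (2*(1-(1-q)^M)*((M:ℝ)*(1-q)^(M-1))) q := by
      have := hinner.fun_pow 2
      exact this.congr_deriv (by norm_num)
    have hq2 : HasDerivAt (fun q : ℝ => 1 - q^2) (-(2*q)) q := by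
      have : HasDerivAt (fun q : ℝ => q^2) (2*q) q := by
        simpa using (hasDerivAt_id q).fun_pow 2
      simpa using this.const_sub 1
    have hD : HasDerivAt (fun q : ℝ => 1 - (1-q^2)^M)
        ((M:ℝ)*(1-q^2)^(M-1)*(2*q)) q := by
      have := (hq2.fun_pow M).const_sub 1
      exact this.congr_deriv (by ring)
    exact hN.div hD (ne_of_gt (hDpos q hq))
  constructor
  · apply strictAntiOn_of_deriv_neg (convex_Ioo 0 1)
    · intro x hx
      exact ((hder x hx).differentiableAt.continuousAt).continuousWithinAt
    · intro x hx
      rw [interior_Ioo] at hx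
      rw [(hder x hx).deriv]
      apply div_neg_of_neg_of_pos
      · have hb := bracket_key M hM hx.1 hx.2
        have h1aM : 0 < 1 - (1-x)^M := by
          have : (1-x)^M < 1 := pow_lt_one₀ (by linarith [hx.2]) (by linarith [hx.1]) hMne
          linarith
        have hMpos : (0:ℝ) < (M:ℝ) := by positivity
        nlinarith [mul_lt_mul_of_pos_left hb
          (mul_pos (mul_pos (mul_pos two_pos hMpos) h1aM) h1aM),
          mul_lt_mul_of_pos_left hb (mul_pos (mul_pos two_pos hMpos) h1aM)]
      · have := hDpos x hx
        positivity
  · norm_num [zero_pow hMne]
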